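/- Let E be a nonzero real Banach space, S : E ⇉ E* maximally monotone, and suppose dom φ_S ⊆ G(S). Then φ_S* = θ_S on E* × E**, where θ_S(y*,y**) := sup_{(s,s*)∈G(S)}[⟨s,y*⟩ + ⟨s*,y**⟩ − ⟨s,s*⟩] and φ_S* is the Fenchel conjugate of the Fitzpatrick function under the pairing ⟨(x,x*),(y*,y**)⟩ = ⟨x,y*⟩ + ⟨x*,y**⟩. -/

import Mathlib

/-- The Fitzpatrick function of the monotone set `G ⊆ E × E*`. -/
noncomputable def fitz {E : Type*} [NormedAddCommGroup E] [NormedSpace ℝ E]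
    (G : Set (E × StrongDual ℝ E)) (b : E × StrongDual ℝ E) : EReal :=
  ⨆ p ∈ G, ((b.2 p.1 + p.2 b.1 - p.2 p.1 : ℝ) : EReal)

lemma fitz_of_mem {E : Type*} [NormedAddCommGroup E] [NormedSpace ℝ E]
    (G : Set (E × StrongDual ℝ E))
    (hmono : ∀ a ∈ G, ∀ b ∈ G, 0 ≤ (a.2 - b.2) (a.1 - b.1))
    {b : E × StrongDual ℝ E} (hb : b ∈ G) :
    fitz G b = ((b.2 b.1 : ℝ) : EReal) := by
  apply le_antisymm
  · apply iSup₂_le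
    intro p hp
    have h := hmono p hp b hb
    simp only [ContinuousLinearMap.sub_apply, map_sub] at h
    exact_mod_cast (by linarith : (b.2 p.1 + p.2 b.1 - p.2 p.1 : ℝ) ≤ b.2 b.1)
  · have := le_iSup₂ (f := fun (p : E × StrongDual ℝ E) (_ : p ∈ G) =>
      ((b.2 p.1 + p.2 b.1 - p.2 p.1 : ℝ) : EReal)) b hb
    simpa [fitz] using this

theorem stmt16 {E : Type*} [NormedAddCommGroup E] [NormedSpace ℝ E] [CompleteSpace E]
    [Nontrivial E]
    (G : Set (E × StrongDual ℝ E))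
    (hmono : ∀ a ∈ G, ∀ b ∈ G, 0 ≤ (a.2 - b.2) (a.1 - b.1))
    (hmax : ∀ c : E × StrongDual ℝ E,
      (∀ a ∈ G, 0 ≤ (a.2 - c.2) (a.1 - c.1)) → c ∈ G)
    (hdom : {b : E × StrongDual ℝ E | fitz G b ≠ ⊤} ⊆ G) :
    ∀ (y' : StrongDual ℝ E) (y'' : StrongDual ℝ (StrongDual ℝ E)),
      (⨆ b : E × StrongDual ℝ E, ((y' b.1 + y'' b.2 : ℝ) : EReal) - fitz G b)
        = ⨆ p ∈ G, ((y' p.1 + y'' p.2 - p.2 p.1 : ℝ) : EReal) := by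
  intro y' y''
  apply iSup_congr
  intro b
  by_cases hb : b ∈ G
  · rw [fitz_of_mem G hmono hb, iSup_pos hb]
    rw [← EReal.coe_sub]
    
  · have htop : fitz G b = ⊤ := by
      by_contra h
      exact hb (hdom h)
    rw [htop]
    simp [hb, EReal.sub_top]
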